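/- Let γ₁, γ₂, h₁, h₂ > 0, d ≥ 2, with (γ₁/γ₂)^{1/d} ≤ h₁/h₂ ≤ (γ₂/γ₁)^{1/2}. Then for all r > 0, (r² + h₁²)/(r² + h₂²) ≥ (γ₁h₁²/(γ₂h₂²))^{2/(d+2)}, and consequently r ↦ r^{d-1} Q'(r) is nondecreasing on (0,∞), where Q'(r) = max(1,d−2) · r · (γ₂(r²+h₂²)^{-d/2} − γ₁(r²+h₁²)^{-d/2}). -/

import Mathlib

open Real

private lemma psi_hasDerivAt (d h r : ℝ) (hh : 0 < h) (hr : 0 < r) :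
    HasDerivAt (fun x : ℝ => x ^ d * (x ^ 2 + h ^ 2) ^ (-d / 2))
      (d * r ^ (d - 1) * h ^ 2 * (r ^ 2 + h ^ 2) ^ (-d / 2 - 1)) r := by
  have hs : 0 < r ^ 2 + h ^ 2 := by positivity
  have h1 : HasDerivAt (fun x : ℝ => x ^ d) (d * r ^ (d - 1)) r :=
    Real.hasDerivAt_rpow_const (Or.inl hr.ne')
  have h2 : HasDerivAt (fun x : ℝ => x ^ 2 + h ^ 2) (2 * r) r := by
    simpa using (hasDerivAt_pow 2 r).add_const (h ^ 2)
  have h3 : HasDerivAt (fun x : ℝ => (x ^ 2 + h ^ 2) ^ (-d / 2))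
      (2 * r * (-d / 2) * (r ^ 2 + h ^ 2) ^ (-d / 2 - 1)) r :=
    h2.rpow_const (Or.inl hs.ne')
  have h4 := h1.mul h3
  have e1 : r ^ d = r ^ (d - 1) * r := by
    rw [← Real.rpow_add_one hr.ne']; ring_nf
  have e2 : (r ^ 2 + h ^ 2) ^ (-d / 2) = (r ^ 2 + h ^ 2) ^ (-d / 2 - 1) * (r ^ 2 + h ^ 2) := by
    rw [← Real.rpow_add_one hs.ne']; ring_nf
  exact h4.congr_deriv (by rw [e1, e2]; ring)

/-- Under `(γ₁/γ₂)^{1/d} ≤ h₁/h₂ ≤ (γ₂/γ₁)^{1/2}`, for all `r > 0` one has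
`(r²+h₁²)/(r²+h₂²) ≥ (γ₁h₁²/(γ₂h₂²))^{2/(d+2)}`, and consequently
`r ↦ r^{d-1} Q'(r)` is nondecreasing on `(0,∞)`. -/
theorem rpow_mul_Q_deriv_monotone (d γ₁ γ₂ h₁ h₂ : ℝ) (hd : 2 ≤ d)
    (hγ₁ : 0 < γ₁) (hγ₂ : 0 < γ₂) (hh₁ : 0 < h₁) (hh₂ : 0 < h₂)
    (hlow : (γ₁ / γ₂) ^ (1 / d) ≤ h₁ / h₂)
    (hhigh : h₁ / h₂ ≤ (γ₂ / γ₁) ^ ((1 : ℝ) / 2)) :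
    (∀ r : ℝ, 0 < r →
      (γ₁ * h₁ ^ 2 / (γ₂ * h₂ ^ 2)) ^ (2 / (d + 2))
        ≤ (r ^ 2 + h₁ ^ 2) / (r ^ 2 + h₂ ^ 2)) ∧
    MonotoneOn
      (fun r : ℝ => r ^ (d - 1) *
        (max 1 (d - 2) * r *
          (γ₂ * (r ^ 2 + h₂ ^ 2) ^ (-d / 2) - γ₁ * (r ^ 2 + h₁ ^ 2) ^ (-d / 2))))
      (Set.Ioi (0 : ℝ)) := by
  have hd0 : (0:ℝ) < d := by linarith
  have hd2 : (0:ℝ) < d + 2 := by linarith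
  set t : ℝ := h₁ / h₂ with htdef
  have ht : 0 < t := by positivity
  set A : ℝ := γ₁ / γ₂ with hAdef
  have hA : 0 < A := by positivity
  have hB : 0 < γ₁ * h₁ ^ 2 / (γ₂ * h₂ ^ 2) := by positivity
  have hBeq : γ₁ * h₁ ^ 2 / (γ₂ * h₂ ^ 2) = A * t ^ 2 := by
    rw [hAdef, htdef]; field_simp
  -- A ≤ t ^ d
  have hAt : A ≤ t ^ d := by
    have h5 := Real.rpow_le_rpow (Real.rpow_nonneg hA.le _) hlow hd0.le
    rwa [← Real.rpow_mul hA.le, one_div, inv_mul_cancel₀ hd0.ne', Real.rpow_one] at h5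
  have ht2 : t ^ (2:ℝ) = t ^ 2 := by
    rw [show (2:ℝ) = ((2:ℕ):ℝ) by norm_num, Real.rpow_natCast]
  -- B ≤ t ^ (d+2)
  have hBle : A * t ^ 2 ≤ t ^ (d + 2) := by
    have e : t ^ (d + 2) = t ^ d * t ^ 2 := by rw [Real.rpow_add ht, ht2]
    rw [e]
    exact mul_le_mul_of_nonneg_right hAt (sq_nonneg t)
  -- B ≤ 1
  have hsq : t ^ 2 ≤ γ₂ / γ₁ := by
    have h6 : t ^ 2 ≤ ((γ₂ / γ₁) ^ ((1:ℝ)/2)) ^ 2 :=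
      pow_le_pow_left₀ ht.le hhigh 2
    rwa [← Real.rpow_natCast ((γ₂ / γ₁) ^ ((1:ℝ)/2)) 2, ← Real.rpow_mul (by positivity),
      show ((1:ℝ)/2) * ((2:ℕ):ℝ) = 1 by norm_num, Real.rpow_one] at h6
  have hB1 : γ₁ * h₁ ^ 2 / (γ₂ * h₂ ^ 2) ≤ 1 := by
    rw [hBeq]
    calc A * t ^ 2 ≤ A * (γ₂ / γ₁) := mul_le_mul_of_nonneg_left hsq hA.le
      _ = 1 := by rw [hAdef]; field_simp
  -- Part 1
  have part1 : ∀ r : ℝ, 0 < r →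
      (γ₁ * h₁ ^ 2 / (γ₂ * h₂ ^ 2)) ^ (2 / (d + 2)) ≤ (r ^ 2 + h₁ ^ 2) / (r ^ 2 + h₂ ^ 2) := by
    intro r hr
    have hs₁ : 0 < r ^ 2 + h₁ ^ 2 := by positivity
    have hs₂ : 0 < r ^ 2 + h₂ ^ 2 := by positivity
    rcases le_total h₁ h₂ with hle | hle
    · -- bound by t^2
      have b1 : (γ₁ * h₁ ^ 2 / (γ₂ * h₂ ^ 2)) ^ (2 / (d + 2)) ≤ t ^ 2 := by
        have h7 := Real.rpow_le_rpow hB.le (hBeq ▸ hBle) (by positivity : (0:ℝ) ≤ 2 / (d + 2))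
        rwa [← Real.rpow_mul ht.le, show (d + 2) * (2 / (d + 2)) = 2 by field_simp, ht2] at h7
      refine b1.trans ?_
      have h8 : h₁ ^ 2 ≤ h₂ ^ 2 := pow_le_pow_left₀ hh₁.le hle 2
      rw [htdef, div_pow, div_le_div_iff₀ (by positivity) hs₂]
      nlinarith [sq_nonneg r]
    · -- bound by 1
      have b2 : (γ₁ * h₁ ^ 2 / (γ₂ * h₂ ^ 2)) ^ (2 / (d + 2)) ≤ 1 :=
        Real.rpow_le_one hB.le hB1 (by positivity)
      refine b2.trans ?_
      rw [le_div_iff₀ hs₂, one_mul]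
      have h8 : h₂ ^ 2 ≤ h₁ ^ 2 := pow_le_pow_left₀ hh₂.le hle 2
      linarith
  refine ⟨part1, ?_⟩
  -- Step 2: pointwise inequality for the derivative
  have step2 : ∀ r : ℝ, 0 < r →
      γ₁ * h₁ ^ 2 * (r ^ 2 + h₁ ^ 2) ^ (-d / 2 - 1)
        ≤ γ₂ * h₂ ^ 2 * (r ^ 2 + h₂ ^ 2) ^ (-d / 2 - 1) := by
    intro r hr
    have hs₁ : 0 < r ^ 2 + h₁ ^ 2 := by positivity
    have hs₂ : 0 < r ^ 2 + h₂ ^ 2 := by positivity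
    have hF := part1 r hr
    set p : ℝ := d / 2 + 1 with hp
    have hp0 : 0 < p := by rw [hp]; positivity
    have h7 := Real.rpow_le_rpow (Real.rpow_nonneg hB.le _) hF hp0.le
    rw [← Real.rpow_mul hB.le, show 2 / (d + 2) * p = 1 by rw [hp]; field_simp,
      Real.rpow_one, Real.div_rpow hs₁.le hs₂.le,
      div_le_div_iff₀ (by positivity) (by positivity)] at h7
    -- h7 : γ₁ * h₁ ^ 2 * (r^2+h₂^2)^p ≤ (r^2+h₁^2)^p * (γ₂ * h₂ ^ 2)
    have hne : -d / 2 - 1 = -p := by rw [hp]; ring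
    rw [hne, Real.rpow_neg hs₁.le, Real.rpow_neg hs₂.le, ← div_eq_mul_inv, ← div_eq_mul_inv,
      div_le_div_iff₀ (by positivity) (by positivity)]
    calc γ₁ * h₁ ^ 2 * (r ^ 2 + h₂ ^ 2) ^ p ≤ (r ^ 2 + h₁ ^ 2) ^ p * (γ₂ * h₂ ^ 2) := h7
      _ = γ₂ * h₂ ^ 2 * (r ^ 2 + h₁ ^ 2) ^ p := by ring
  -- Monotonicity
  set c : ℝ := max 1 (d - 2) with hcdef
  have hc : (0:ℝ) < c := lt_of_lt_of_le one_pos (le_max_left _ _)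
  set g : ℝ → ℝ := fun r =>
    c * (γ₂ * (r ^ d * (r ^ 2 + h₂ ^ 2) ^ (-d / 2)) -
         γ₁ * (r ^ d * (r ^ 2 + h₁ ^ 2) ^ (-d / 2))) with hgdef
  have hgd : ∀ r ∈ Set.Ioi (0:ℝ), HasDerivAt g
      (c * (γ₂ * (d * r ^ (d - 1) * h₂ ^ 2 * (r ^ 2 + h₂ ^ 2) ^ (-d / 2 - 1)) -
            γ₁ * (d * r ^ (d - 1) * h₁ ^ 2 * (r ^ 2 + h₁ ^ 2) ^ (-d / 2 - 1)))) r := by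
    intro r hr
    exact ((((psi_hasDerivAt d h₂ r hh₂ hr).const_mul γ₂).sub
      ((psi_hasDerivAt d h₁ r hh₁ hr).const_mul γ₁)).const_mul c)
  have hgmono : MonotoneOn g (Set.Ioi (0:ℝ)) := by
    apply monotoneOn_of_deriv_nonneg (convex_Ioi 0)
    · exact fun r hr => ((hgd r hr).differentiableAt.continuousAt).continuousWithinAt
    · rw [interior_Ioi]
      exact fun r hr => ((hgd r hr).differentiableAt).differentiableWithinAt
    · rw [interior_Ioi]
      intro r hr
      rw [(hgd r hr).deriv]
      have hr0 : (0:ℝ) < r := hr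
      have hrd : (0:ℝ) ≤ d * r ^ (d - 1) := by positivity
      have key := mul_le_mul_of_nonneg_left (step2 r hr0) hrd
      apply mul_nonneg hc.le
      have e1 : γ₂ * (d * r ^ (d - 1) * h₂ ^ 2 * (r ^ 2 + h₂ ^ 2) ^ (-d / 2 - 1)) =
          d * r ^ (d - 1) * (γ₂ * h₂ ^ 2 * (r ^ 2 + h₂ ^ 2) ^ (-d / 2 - 1)) := by ring
      have e2 : γ₁ * (d * r ^ (d - 1) * h₁ ^ 2 * (r ^ 2 + h₁ ^ 2) ^ (-d / 2 - 1)) =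
          d * r ^ (d - 1) * (γ₁ * h₁ ^ 2 * (r ^ 2 + h₁ ^ 2) ^ (-d / 2 - 1)) := by ring
      rw [e1, e2]
      linarith
  intro a ha b hb hab
  have heq : ∀ r ∈ Set.Ioi (0:ℝ),
      r ^ (d - 1) * (c * r *
        (γ₂ * (r ^ 2 + h₂ ^ 2) ^ (-d / 2) - γ₁ * (r ^ 2 + h₁ ^ 2) ^ (-d / 2))) = g r := by
    intro r hr
    have hr0 : (0:ℝ) < r := hr
    have e1 : r ^ d = r ^ (d - 1) * r := by
      rw [← Real.rpow_add_one hr0.ne']; ring_nf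
    rw [hgdef]
    simp only []
    rw [e1]; ring
  simp only []
  rw [heq a ha, heq b hb]
  exact hgmono ha hb hab
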